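/- Let R be a commutative ring, W an R-module, Λ(W) the exterior algebra of W, Γ the grade involution of Λ(W) (the algebra automorphism with Γ(w) = −w for w ∈ W), ι_φ the left contraction of Λ(W) by a dual element φ ∈ W* , and w∧ left exterior multiplication by w ∈ W. For a quadruple a = (φ, f, w, g) with φ ∈ W*, w ∈ W, f, g ∈ R, define the R-linear operator c(a) on Λ(W) ⊕ Λ(W) by c(a)(ω₁, ω₀) = (ι_φ ω₁ + w∧ω₁ + f·Γω₀ , ι_φ ω₀ + w∧ω₀ + g·Γω₁), and define T : Λ(W) ⊕ Λ(W) → Λ(W) ⊕ Λ(W) by T(ω₁, ω₀) = (Γω₀, −Γω₁). Then for all φ ∈ W*, w ∈ W, f, g ∈ R and all (ω₁, ω₀) ∈ Λ(W) ⊕ Λ(W), one has T(c(φ, f, w, g)(ω₁, ω₀)) = −c(φ, g, w, f)(T(ω₁, ω₀)). In other words, T intertwines the Clifford action of a = (φ, f, w, g) with that of its T-dual μ(a) = −(φ, g, w, f). -/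

import Mathlib

open ExteriorAlgebra

lemma involute_contractLeft {R : Type*} [CommRing R] {W : Type*} [AddCommGroup W]
    [Module R W] {Q : QuadraticForm R W} (φ : Module.Dual R W) (x : CliffordAlgebra Q) :
    CliffordAlgebra.involute (CliffordAlgebra.contractLeft φ x) =
      - CliffordAlgebra.contractLeft φ (CliffordAlgebra.involute x) := by
  induction x using CliffordAlgebra.left_induction with
  | algebraMap r => simp [CliffordAlgebra.contractLeft_algebraMap]
  | add a b ha hb => simp only [map_add, ha, hb]; abel_nf
  | ι_mul a m ha =>
      simp only [CliffordAlgebra.contractLeft_ι_mul, map_mul, map_sub, map_smul,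
        CliffordAlgebra.involute_ι, ha, neg_mul, mul_neg, neg_neg, map_neg]

/-- The Clifford action of a quadruple `(φ, f, w, g)` on pairs of exterior-algebra
elements `(ω₁, ω₀)`:
`c(φ,f,w,g)(ω₁,ω₀) = (ι_φ ω₁ + w∧ω₁ + f·Γω₀ , ι_φ ω₀ + w∧ω₀ + g·Γω₁)`. -/
noncomputable def cliffordAction {R : Type*} [CommRing R] {W : Type*} [AddCommGroup W]
    [Module R W] (φ : Module.Dual R W) (f : R) (w : W) (g : R)
    (x : ExteriorAlgebra R W × ExteriorAlgebra R W) :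
    ExteriorAlgebra R W × ExteriorAlgebra R W :=
  (CliffordAlgebra.contractLeft φ x.1 + ι R w * x.1 + f • CliffordAlgebra.involute x.2,
   CliffordAlgebra.contractLeft φ x.2 + ι R w * x.2 + g • CliffordAlgebra.involute x.1)

/-- The Fourier–Mukai-type transform `T(ω₁, ω₀) = (Γω₀, −Γω₁)`. -/
noncomputable def fmTransform {R : Type*} [CommRing R] {W : Type*} [AddCommGroup W]
    [Module R W] (x : ExteriorAlgebra R W × ExteriorAlgebra R W) :
    ExteriorAlgebra R W × ExteriorAlgebra R W :=
  (CliffordAlgebra.involute x.2, -CliffordAlgebra.involute x.1)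

/-- T-duality intertwines the Clifford action of `a = (φ, f, w, g)` with that of its
T-dual `μ(a) = −(φ, g, w, f)`:  `T(c(φ,f,w,g) x) = −c(φ,g,w,f)(T x)`. -/
theorem fmTransform_cliffordAction {R : Type*} [CommRing R] {W : Type*} [AddCommGroup W]
    [Module R W] (φ : Module.Dual R W) (w : W) (f g : R)
    (x : ExteriorAlgebra R W × ExteriorAlgebra R W) :
    fmTransform (cliffordAction φ f w g x) = -cliffordAction φ g w f (fmTransform x) := by
  obtain ⟨a, b⟩ := x
  simp only [fmTransform, cliffordAction, Prod.neg_mk, Prod.mk.injEq, map_add, map_smul,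
    map_mul, map_neg, CliffordAlgebra.involute_ι, CliffordAlgebra.involute_involute,
    involute_contractLeft, neg_mul, neg_neg, smul_neg, neg_add_rev, ExteriorAlgebra.ι,
    mul_neg, neg_smul, mul_smul_comm]
  exact ⟨by abel, trivial⟩
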